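/- For every d > 0 and every ε ≥ (2e^{-1/2} − 1)d, the function q_{d,ε}(t) = ln⁺(d/t) · (d−t)₊ · ((d−t)₊ + ε)^{-3} is monotone decreasing on (0, ∞). -/

import Mathlib

-- Lemma A: 2 s log s ≤ s² - 1 for s ≥ 1
lemma lemA : ∀ s : ℝ, 1 ≤ s → 2 * s * Real.log s ≤ s^2 - 1 := by
  have h : MonotoneOn (fun s : ℝ => s^2 - 1 - 2*s*Real.log s) (Set.Ici 1) := by
    apply monotoneOn_of_deriv_nonneg (convex_Ici 1)
    · apply ContinuousOn.sub
      · fun_prop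
      · exact ContinuousOn.mul (by fun_prop) (Real.continuousOn_log.mono (by
          intro x hx; simp at hx ⊢; linarith))
    · intro x hx
      rw [interior_Ici] at hx
      have hx0 : (0:ℝ) < x := lt_trans one_pos hx
      have : HasDerivAt (fun s : ℝ => s^2 - 1 - 2*s*Real.log s)
          (2*x - (2 * Real.log x + 2*x * x⁻¹)) x := by
        have h1 : HasDerivAt (fun s : ℝ => s^2 - 1) (2*x) x := by
          simpa using ((hasDerivAt_pow 2 x).sub_const 1)
        have h2 : HasDerivAt (fun s : ℝ => 2*s*Real.log s) (2 * Real.log x + 2*x * x⁻¹) x := by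
          simpa [Pi.mul_def] using ((hasDerivAt_id x).const_mul 2).mul (Real.hasDerivAt_log hx0.ne')
        exact h1.sub h2
      exact this.differentiableAt.differentiableWithinAt
    · intro x hx
      rw [interior_Ici] at hx
      have hx0 : (0:ℝ) < x := lt_trans one_pos hx
      have h1 : HasDerivAt (fun s : ℝ => s^2 - 1) (2*x) x := by
        simpa using ((hasDerivAt_pow 2 x).sub_const 1)
      have h2 : HasDerivAt (fun s : ℝ => 2*s*Real.log s) (2 * Real.log x + 2*x * x⁻¹) x := by
        simpa [Pi.mul_def] using ((hasDerivAt_id x).const_mul 2).mul (Real.hasDerivAt_log hx0.ne')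
      rw [(show HasDerivAt (fun s : ℝ => s^2 - 1 - 2*s*Real.log s) _ x from h1.sub h2).deriv]
      have := Real.log_le_sub_one_of_pos hx0
      have : x * x⁻¹ = 1 := mul_inv_cancel₀ hx0.ne'
      nlinarith [Real.log_le_sub_one_of_pos hx0]
  intro s hs
  have := h (Set.self_mem_Ici) hs hs
  simp [Real.log_one] at this
  nlinarith [this]


lemma key (t u ε L s : ℝ) (ht : 0 < t) (hu : 0 < u) (hs : 1 ≤ s)
    (hs2 : s^2 * t = t + u) (hL0 : 0 ≤ L) (hLs : L * s ≤ s^2 - 1)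
    (hε : (t + u)/8 ≤ ε) : 3*L*u ≤ (u/t + L)*(u+ε) := by
  have hs0 : (0:ℝ) < s := lt_of_lt_of_le one_pos hs
  have hut : u / t = s^2 - 1 := by field_simp; linarith
  rw [hut]
  have hε0 : 0 < ε := lt_of_lt_of_le (by positivity) hε
  have hu' : u = t*(s^2-1) := by linarith
  have hsq : (0:ℝ) ≤ s^2 - 1 := by nlinarith
  have h8 : t*s^2/8 ≤ ε := by nlinarith
  -- main auxiliary: t(s²-1)(2-s) ≤ ε(1+s)
  have h9 : t*(s^2-1)*(2-s) ≤ ε*(1+s) := by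
    rcases le_or_gt s 2 with h | h
    · nlinarith [mul_nonneg (mul_nonneg ht.le (sq_nonneg (3*s-4))) (by linarith : (0:ℝ) ≤ s+1)]
    · nlinarith [mul_nonneg (mul_nonneg ht.le hsq) (by linarith : (0:ℝ) ≤ s-2), mul_nonneg hε0.le (by linarith : (0:ℝ) ≤ 1+s)]
  by_cases hc : 2*u ≤ ε
  · nlinarith [mul_nonneg hL0 (sub_nonneg.2 hc), mul_nonneg (mul_nonneg hL0 hu.le) hε0.le]
  · push_neg at hc
    have h1 : L*(2*u-ε) ≤ (u/(t*s))*(2*u-ε) := by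
      apply mul_le_mul_of_nonneg_right _ (by linarith)
      calc L ≤ (s^2-1)/s := by rw [le_div_iff₀ hs0]; linarith
        _ = u/(t*s) := by rw [hu']; field_simp
    have h2 : (u/(t*s))*(2*u-ε) ≤ (s^2-1)*(u+ε) := by
      rw [div_mul_eq_mul_div, div_le_iff₀ (by positivity), hu']
      nlinarith [mul_nonneg (mul_nonneg ht.le hsq) (sub_nonneg.2 h9)]
    nlinarith [h1, h2, mul_nonneg hL0 hε0.le]


theorem stmt3 (d ε : ℝ) (hd : 0 < d) (hε : (2 * Real.exp (-1/2) - 1) * d ≤ ε) :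
    AntitoneOn (fun t : ℝ =>
      max (Real.log (d / t)) 0 * max (d - t) 0 * (max (d - t) 0 + ε) ^ (-3 : ℤ))
      (Set.Ioi (0 : ℝ)) := by
  -- ε ≥ d/8 > 0
  have hexp : (9:ℝ)/16 ≤ Real.exp (-1/2) := by
    have h1 : Real.exp (-1/2) * Real.exp (-1/2) = (Real.exp 1)⁻¹ := by
      rw [← Real.exp_add, ← Real.exp_neg]; norm_num
    have h2 : Real.exp (-1/2) * Real.exp (-1/2) * Real.exp 1 = 1 := by
      rw [← Real.exp_add, ← Real.exp_add]; norm_num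
    nlinarith [h2, Real.exp_one_lt_d9, Real.exp_pos (-1/2 : ℝ), Real.exp_pos (1:ℝ)]
  have hεd : d/8 ≤ ε := le_trans (by nlinarith) hε
  have hε0 : 0 < ε := lt_of_lt_of_le (by positivity) hεd
  set f : ℝ → ℝ := fun t => Real.log (d / t) * (d - t) * ((d - t) + ε) ^ (-3 : ℤ) with hf
  -- derivative data on Ioo 0 d
  have hderiv : ∀ x ∈ Set.Ioo (0:ℝ) d, HasDerivAt f
      (((-x⁻¹) * (d - x) + Real.log (d/x) * (-1)) * ((d-x)+ε)^(-3:ℤ)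
        + Real.log (d/x) * (d-x) * (((-3:ℝ) * ((d-x)+ε)^(-4:ℤ)) * (-1))) x := by
    intro x hx
    obtain ⟨hx0, hxd⟩ := hx
    have hw : (0:ℝ) < (d - x) + ε := by linarith
    have h1 : HasDerivAt (fun t : ℝ => Real.log (d / t)) (-x⁻¹) x := by
      have hb : HasDerivAt (fun t : ℝ => Real.log d - Real.log t) (-x⁻¹) x := by
        simpa using (Real.hasDerivAt_log hx0.ne').const_sub (Real.log d)
      apply hb.congr_of_eventuallyEq
      filter_upwards [eventually_gt_nhds hx0] with y hy
      rw [Real.log_div hd.ne' hy.ne']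
    have h2 : HasDerivAt (fun t : ℝ => d - t) (-1 : ℝ) x := by
      simpa using (hasDerivAt_id x).const_sub d
    have h3 : HasDerivAt (fun t : ℝ => ((d - t) + ε) ^ (-3:ℤ))
        (((-3:ℝ) * ((d-x)+ε)^(-4:ℤ)) * (-1)) x := by
      have hin : HasDerivAt (fun t : ℝ => (d - t) + ε) (-1 : ℝ) x := h2.add_const ε
      have hz := hasDerivAt_zpow (-3) ((d - x) + ε) (Or.inl hw.ne')
      have := hz.comp x hin
      simpa [Function.comp_def] using this
    exact (h1.mul h2).mul h3
  have hanti : AntitoneOn f (Set.Ioo 0 d) := by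
    apply antitoneOn_of_hasDerivWithinAt_nonpos (convex_Ioo 0 d)
    · intro x hx
      exact ((hderiv x hx).continuousAt.continuousWithinAt)
    · intro x hx
      rw [interior_Ioo] at hx
      exact (hderiv x hx).hasDerivWithinAt
    · intro x hx
      rw [interior_Ioo] at hx
      obtain ⟨hx0, hxd⟩ := hx
      have hw : (0:ℝ) < (d - x) + ε := by linarith
      set u := d - x with hu
      set L := Real.log (d / x) with hL
      have hu0 : 0 < u := by simp [hu]; linarith
      set s := Real.sqrt (d / x) with hs
      have hdx1 : (1:ℝ) ≤ d / x := (one_le_div hx0).2 hxd.le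
      have hs1 : 1 ≤ s := by rw [hs]; nlinarith [Real.sq_sqrt (by linarith : (0:ℝ) ≤ d/x), Real.sqrt_nonneg (d/x)]
      have hssq : s^2 = d / x := Real.sq_sqrt (by linarith)
      have hs2 : s^2 * x = x + u := by rw [hssq]; field_simp [hu]; linarith
      have hL0 : 0 ≤ L := Real.log_nonneg hdx1
      have hLs : L * s ≤ s^2 - 1 := by
        have := lemA s hs1
        have hlog : Real.log s = L / 2 := by
          rw [hs, Real.log_sqrt (by linarith)]
        rw [hlog] at this; linarith
      have hε8 : (x + u)/8 ≤ ε := by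
        have : x + u = d := by simp [hu]
        rw [this]; exact hεd
      have hkey := key x u ε L s hx0 hu0 hs1 hs2 hL0 hLs hε8
      -- show the derivative expression ≤ 0
      have hw3 : ((d-x)+ε)^(-3:ℤ) = ((d-x)+ε)^(-4:ℤ) * ((d-x)+ε) := by
        rw [← zpow_add_one₀ hw.ne']; norm_num; rw [hu]
      have hw4 : (0:ℝ) < ((d-x)+ε)^(-4:ℤ) := zpow_pos hw (-4)
      rw [hw3]
      have hexpand : ((-x⁻¹) * (d - x) + Real.log (d/x) * (-1)) * (((d-x)+ε)^(-4:ℤ) * ((d-x)+ε))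
          + Real.log (d/x) * (d-x) * (((-3:ℝ) * ((d-x)+ε)^(-4:ℤ)) * (-1))
          = ((d-x)+ε)^(-4:ℤ) * ((3*L*u) - (u/x + L)*(u+ε)) := by
        rw [← hu, ← hL]
        field_simp
        try ring
      rw [hexpand]
      have : (3*L*u) - (u/x + L)*(u+ε) ≤ 0 := by linarith
      exact mul_nonpos_of_nonneg_of_nonpos hw4.le this
  -- assemble
  intro x hx y hy hxy
  simp only [Set.mem_Ioi] at hx hy
  dsimp only
  rcases lt_or_ge y d with hyd | hyd
  · have hxd : x < d := lt_of_le_of_lt hxy hyd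
    have hqx : ∀ z, 0 < z → z < d →
        max (Real.log (d / z)) 0 * max (d - z) 0 * (max (d - z) 0 + ε) ^ (-3 : ℤ) = f z := by
      intro z hz0 hzd
      have h1 : max (Real.log (d / z)) 0 = Real.log (d / z) :=
        max_eq_left (Real.log_nonneg ((one_le_div hz0).2 hzd.le))
      have h2 : max (d - z) 0 = d - z := max_eq_left (by linarith)
      rw [h1, h2]
    rw [hqx x hx hxd, hqx y hy hyd]
    exact hanti ⟨hx, hxd⟩ ⟨hy, hyd⟩ hxy
  · have hqy : max (Real.log (d / y)) 0 = 0 := by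
      apply max_eq_right
      apply Real.log_nonpos (by positivity)
      rw [div_le_one hy]; exact hyd
    rw [hqy, zero_mul, zero_mul]
    have hbx : (0:ℝ) < max (d - x) 0 + ε := by positivity
    positivity
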